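/- arXiv:2312.17037 — 3 statements merged into one kernel-verified Lean document; each statement's English description precedes it below -/
import Mathlib

section
/- For d ≥ 2, let U := I_{d²} − (2/d)·|Ω⟩⟨Ω| with Ω := Σ_{i=1}^{d} e_i ⊗ e_i ∈ ℂ^{d·d}. Then (d−2)/d is the least element of the set { |⟨ψ1⊗ψ2, U(ψ1⊗ψ2)⟩| : ψ1, ψ2 ∈ ℂ^d, ‖ψ1‖ = ‖ψ2‖ = 1 }; the minimum is attained at ψ1 = ψ2 = e_1. That is, z_{d:d}(U) = (d−2)/d. -/
open Matrix
open scoped ComplexInnerProductSpace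

/-- The tensor (Kronecker) product of two vectors: `(ψ1 ⊗ ψ2)_{(i,j)} = (ψ1)_i · (ψ2)_j`. -/
noncomputable def tensorVec {d1 d2 : ℕ} (ψ1 : EuclideanSpace ℂ (Fin d1))
    (ψ2 : EuclideanSpace ℂ (Fin d2)) : EuclideanSpace ℂ (Fin d1 × Fin d2) :=
  WithLp.toLp 2 (fun p : Fin d1 × Fin d2 => ψ1 p.1 * ψ2 p.2)

/-- The unnormalized maximally entangled vector `Ω = Σ_i e_i ⊗ e_i ∈ ℂ^{d·d}`,
with entries `Ω_{(i,j)} = δ_{i,j}`. -/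
noncomputable def maxEnt (d : ℕ) : Fin d × Fin d → ℂ :=
  fun p => if p.1 = p.2 then 1 else 0

/-- The extremal unitary `U = I_{d²} - (2/d)·|Ω⟩⟨Ω|`, where `|Ω⟩⟨Ω|` is the rank-one
matrix with entries `Ω_i · conj(Ω_j)`. -/
noncomputable def extremalU (d : ℕ) : Matrix (Fin d × Fin d) (Fin d × Fin d) ℂ :=
  1 - ((2 : ℂ) / d) • Matrix.vecMulVec (maxEnt d) (star (maxEnt d))

lemma stmt9_key (d : ℕ) (ψ1 ψ2 : EuclideanSpace ℂ (Fin d)) :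
    ⟪tensorVec ψ1 ψ2, Matrix.toEuclideanLin (extremalU d) (tensorVec ψ1 ψ2)⟫
    = (∑ i, (starRingEnd ℂ) (ψ1 i) * ψ1 i) * (∑ j, (starRingEnd ℂ) (ψ2 j) * ψ2 j)
      - (2/(d:ℂ)) * (starRingEnd ℂ (∑ i, ψ1 i * ψ2 i)) * (∑ i, ψ1 i * ψ2 i) := by
  simp [tensorVec, extremalU, maxEnt, Matrix.toEuclideanLin_apply, PiLp.inner_apply,
    Matrix.mulVec, dotProduct, Fintype.sum_prod_type, Matrix.vecMulVec_apply,
    sub_mul, mul_sub, Finset.sum_sub_distrib, map_sum, Finset.mul_sum, Finset.sum_mul,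
    RCLike.inner_apply, Matrix.one_apply, -inner_self_eq_norm_sq_to_K]
  congr 1 <;>
    (rw [Finset.sum_comm]; exact Finset.sum_congr rfl fun i _ => Finset.sum_congr rfl fun j _ => by ring)

lemma stmt9_key2 (d : ℕ) (ψ1 ψ2 : EuclideanSpace ℂ (Fin d)) (h1 : ‖ψ1‖ = 1) (h2 : ‖ψ2‖ = 1) :
    ⟪tensorVec ψ1 ψ2, Matrix.toEuclideanLin (extremalU d) (tensorVec ψ1 ψ2)⟫
    = ((1 - (2/(d:ℝ)) * Complex.normSq (∑ i, ψ1 i * ψ2 i) : ℝ) : ℂ) := by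
  rw [stmt9_key]
  have e1 : (∑ i, (starRingEnd ℂ) (ψ1 i) * ψ1 i) = 1 := by
    have := @inner_self_eq_norm_sq_to_K ℂ _ _ _ _ ψ1
    simp only [PiLp.inner_apply, RCLike.inner_apply] at this
    rw [show (∑ i, (starRingEnd ℂ) (ψ1 i) * ψ1 i) = ∑ i, ψ1 i * (starRingEnd ℂ) (ψ1 i) from Finset.sum_congr rfl fun i _ => mul_comm _ _, this, h1]; norm_num
  have e2 : (∑ i, (starRingEnd ℂ) (ψ2 i) * ψ2 i) = 1 := by
    have := @inner_self_eq_norm_sq_to_K ℂ _ _ _ _ ψ2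
    simp only [PiLp.inner_apply, RCLike.inner_apply] at this
    rw [show (∑ i, (starRingEnd ℂ) (ψ2 i) * ψ2 i) = ∑ i, ψ2 i * (starRingEnd ℂ) (ψ2 i) from Finset.sum_congr rfl fun i _ => mul_comm _ _, this, h2]; norm_num
  rw [e1, e2]
  push_cast
  rw [Complex.normSq_eq_conj_mul_self]
  ring

lemma stmt9_cs (d : ℕ) (ψ1 ψ2 : EuclideanSpace ℂ (Fin d)) (h1 : ‖ψ1‖ = 1) (h2 : ‖ψ2‖ = 1) :
    Complex.normSq (∑ i, ψ1 i * ψ2 i) ≤ 1 := by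
  set χ : EuclideanSpace ℂ (Fin d) := WithLp.toLp 2 (fun i => (starRingEnd ℂ) (ψ1 i)) with hχ
  have hs : (∑ i, ψ1 i * ψ2 i) = ⟪χ, ψ2⟫ := by
    simp [PiLp.inner_apply, RCLike.inner_apply, hχ, mul_comm]
  have hnχ : ‖χ‖ = 1 := by
    rw [← h1]
    rw [EuclideanSpace.norm_eq, EuclideanSpace.norm_eq]
    congr 1
    exact Finset.sum_congr rfl fun i _ => by simp [hχ]
  have := norm_inner_le_norm (𝕜 := ℂ) χ ψ2
  rw [hnχ, h2] at this
  have habs : ‖(∑ i, ψ1 i * ψ2 i)‖ ≤ 1 := by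
    rw [hs]; simpa using this
  have := Complex.sq_norm (∑ i, ψ1 i * ψ2 i)
  nlinarith [norm_nonneg (∑ i, ψ1 i * ψ2 i)]

/-- For `d ≥ 2`, the value `(d-2)/d` is the least element of
`{ |⟨ψ1⊗ψ2, U(ψ1⊗ψ2)⟩| : ‖ψ1‖ = ‖ψ2‖ = 1 }`, i.e. `z_{d:d}(U) = (d-2)/d`, and the
minimum is attained at `ψ1 = ψ2 = e_1`. -/
theorem stmt9 (d : ℕ) (hd : 2 ≤ d) :
    IsLeast
      {r : ℝ | ∃ ψ1 ψ2 : EuclideanSpace ℂ (Fin d), ‖ψ1‖ = 1 ∧ ‖ψ2‖ = 1 ∧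
        r = ‖⟪tensorVec ψ1 ψ2, Matrix.toEuclideanLin (extremalU d) (tensorVec ψ1 ψ2)⟫‖}
      (((d : ℝ) - 2) / d) ∧
    ‖⟪tensorVec (EuclideanSpace.single (⟨0, by omega⟩ : Fin d) (1 : ℂ))
            (EuclideanSpace.single (⟨0, by omega⟩ : Fin d) (1 : ℂ)),
          Matrix.toEuclideanLin (extremalU d)
            (tensorVec (EuclideanSpace.single (⟨0, by omega⟩ : Fin d) (1 : ℂ))
              (EuclideanSpace.single (⟨0, by omega⟩ : Fin d) (1 : ℂ)))⟫‖ =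
      ((d : ℝ) - 2) / d := by
  have hdR : (2:ℝ) ≤ (d:ℝ) := by exact_mod_cast hd
  have hd0 : (0:ℝ) < d := by linarith
  set e0 : EuclideanSpace ℂ (Fin d) := EuclideanSpace.single (⟨0, by omega⟩ : Fin d) (1 : ℂ)
  have he0 : ‖e0‖ = 1 := by simp [e0]
  have hsum : (∑ i, e0 i * e0 i) = 1 := by
    simp [e0, EuclideanSpace.single_apply]
  have hval : ‖⟪tensorVec e0 e0, Matrix.toEuclideanLin (extremalU d) (tensorVec e0 e0)⟫‖
      = ((d:ℝ) - 2) / d := by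
    rw [stmt9_key2 d e0 e0 he0 he0, hsum]
    rw [Complex.norm_real, Real.norm_eq_abs]
    rw [abs_of_nonneg (by simp; rw [div_le_one hd0]; linarith)]
    field_simp
    simp
  refine ⟨⟨⟨e0, e0, he0, he0, hval.symm⟩, ?_⟩, hval⟩
  rintro r ⟨ψ1, ψ2, h1, h2, rfl⟩
  rw [stmt9_key2 d ψ1 ψ2 h1 h2, Complex.norm_real, Real.norm_eq_abs]
  have ht0 := Complex.normSq_nonneg (∑ i, ψ1 i * ψ2 i)
  have ht1 := stmt9_cs d ψ1 ψ2 h1 h2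
  set t := Complex.normSq (∑ i, ψ1 i * ψ2 i)
  have hge : ((d:ℝ) - 2) / d ≤ 1 - 2 / d * t := by
    have hsplit : ((d:ℝ) - 2) / d = 1 - 2 / d := by field_simp
    have h2d : 2 / (d:ℝ) * t ≤ 2 / d * 1 :=
      mul_le_mul_of_nonneg_left ht1 (div_nonneg (by norm_num) hd0.le)
    rw [hsplit]; linarith
  calc ((d:ℝ) - 2) / d ≤ 1 - 2 / d * t := hge
    _ ≤ |1 - 2 / d * t| := le_abs_self _
end

section
/- Let V be an n×n complex unitary matrix with an orthonormal eigenbasis x_1, …, x_n and corresponding eigenvalues λ_1, …, λ_n, and let Q be an n×n positive definite Hermitian matrix. If there exists a probability vector (p_i)_{i=1}^n (p_i ≥ 0, Σ_i p_i = 1) with Σ_i p_i·λ_i = 0, then there exists a probability vector (q_i)_{i=1}^n with Σ_i q_i·⟨x_i, (V·Q)·x_i⟩ = 0; moreover ⟨x_i, (V·Q)·x_i⟩ = λ_i·⟨x_i, Q·x_i⟩ with ⟨x_i, Q·x_i⟩ > 0 for each i, and consequently 0 lies in the convex hull of the numerical range W(V·Q) = {⟨x, (V·Q)·x⟩ : ‖x‖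 = 1}. -/
open Matrix
open scoped ComplexInnerProductSpace ComplexOrder

/-- Numerical range `W(X) = {⟨ψ, Xψ⟩ : ‖ψ‖ = 1}`. -/
noncomputable def numRange {n : ℕ} (X : Matrix (Fin n) (Fin n) ℂ) : Set ℂ :=
  {z | ∃ ψ : EuclideanSpace ℂ (Fin n), ‖ψ‖ = 1 ∧ ⟪ψ, Matrix.toEuclideanLin X ψ⟫ = z}

/-- Let `V` be unitary with orthonormal eigenbasis `x_i` and eigenvalues
`λ_i`, and let `Q` be positive definite Hermitian. If a probability vector `p` satisfies
`Σ_i p_i λ_i = 0`, then: each diagonal value satisfies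
`⟨x_i, (V·Q) x_i⟩ = λ_i ⟨x_i, Q x_i⟩` with `⟨x_i, Q x_i⟩` a positive real; there is a
probability vector `q` with `Σ_i q_i ⟨x_i, (V·Q) x_i⟩ = 0`; and consequently `0` lies in
the convex hull of the numerical range `W(V·Q)`. -/
theorem stmt11 {n : ℕ} (V Q : Matrix (Fin n) (Fin n) ℂ)
    (hV : V ∈ Matrix.unitaryGroup (Fin n) ℂ)
    (x : Fin n → EuclideanSpace ℂ (Fin n)) (hx : Orthonormal ℂ x)
    (lam : Fin n → ℂ)
    (heig : ∀ i, Matrix.toEuclideanLin V (x i) = lam i • x i)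
    (hQ : Q.PosDef)
    (p : Fin n → ℝ) (hp0 : ∀ i, 0 ≤ p i) (hp1 : ∑ i, p i = 1)
    (hpl : ∑ i, (p i : ℂ) * lam i = 0) :
    (∀ i, ⟪x i, Matrix.toEuclideanLin (V * Q) (x i)⟫ =
        lam i * ⟪x i, Matrix.toEuclideanLin Q (x i)⟫ ∧
      ∃ r : ℝ, 0 < r ∧ ⟪x i, Matrix.toEuclideanLin Q (x i)⟫ = (r : ℂ)) ∧
    (∃ q : Fin n → ℝ, (∀ i, 0 ≤ q i) ∧ ∑ i, q i = 1 ∧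
      ∑ i, (q i : ℂ) * ⟪x i, Matrix.toEuclideanLin (V * Q) (x i)⟫ = 0) ∧
    (0 : ℂ) ∈ convexHull ℝ (numRange (V * Q)) := by
  classical
  have hxnorm : ∀ i, ‖x i‖ = 1 := fun i => hx.1 i
  have hxone : ∀ i, (⟪x i, x i⟫ : ℂ) = 1 := by
    intro i
    rw [inner_self_eq_norm_sq_to_K, hxnorm i]
    norm_num
  have hmul : ∀ v : EuclideanSpace ℂ (Fin n), Matrix.toEuclideanLin (V * Q) v =
      Matrix.toEuclideanLin V (Matrix.toEuclideanLin Q v) := by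
    intro v
    simp [Matrix.toEuclideanLin_apply, Matrix.mulVec_mulVec]
  have hadj : ∀ (u w : EuclideanSpace ℂ (Fin n)),
      ⟪u, Matrix.toEuclideanLin V w⟫ = ⟪Matrix.toEuclideanLin Vᴴ u, w⟫ := by
    intro u w
    rw [Matrix.toEuclideanLin_conjTranspose_eq_adjoint, LinearMap.adjoint_inner_left]
  have hVHV : ∀ v : EuclideanSpace ℂ (Fin n),
      Matrix.toEuclideanLin Vᴴ (Matrix.toEuclideanLin V v) = v := by
    intro v
    have h1 : Vᴴ * V = 1 := hV.1
    simp [Matrix.toEuclideanLin_apply, Matrix.mulVec_mulVec, h1, Matrix.one_mulVec]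
  -- |lam i| = 1 (as conj * self)
  have hmod : ∀ i, (starRingEnd ℂ) (lam i) * lam i = 1 := by
    intro i
    have h := hadj (Matrix.toEuclideanLin V (x i)) (x i)
    rw [hVHV (x i), hxone i] at h
    rw [heig i, inner_smul_left, inner_smul_right, hxone i] at h
    simpa using h
  have hlamne : ∀ i, lam i ≠ 0 := by
    intro i h
    have := hmod i
    rw [h] at this
    simp at this
  have hconjinv : ∀ i, (starRingEnd ℂ) (lam i)⁻¹ = lam i := by
    intro i
    have h2 : (starRingEnd ℂ) (lam i) = (lam i)⁻¹ := eq_inv_of_mul_eq_one_left (hmod i)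
    rw [map_inv₀, h2, inv_inv]
  -- Vᴴ x i = (lam i)⁻¹ • x i
  have hVH : ∀ i, Matrix.toEuclideanLin Vᴴ (x i) = (lam i)⁻¹ • x i := by
    intro i
    have h : lam i • Matrix.toEuclideanLin Vᴴ (x i) = x i := by
      have h0 := hVHV (x i)
      rwa [heig i, LinearMap.map_smul] at h0
    have h2 := congrArg (fun v => (lam i)⁻¹ • v) h
    simpa [smul_smul, inv_mul_cancel₀ (hlamne i)] using h2
  -- part 1 equality
  have key : ∀ i, ⟪x i, Matrix.toEuclideanLin (V * Q) (x i)⟫ =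
      lam i * ⟪x i, Matrix.toEuclideanLin Q (x i)⟫ := by
    intro i
    rw [hmul, hadj, hVH i, inner_smul_left, hconjinv i]
  -- positivity
  have hxine : ∀ i, x i ≠ 0 := by
    intro i h
    have := hxnorm i
    rw [h] at this
    simp at this
  have hQpos : ∀ i, (0 : ℂ) < ⟪x i, Matrix.toEuclideanLin Q (x i)⟫ := by
    intro i
    have hne : (WithLp.equiv 2 (Fin n → ℂ)) (x i) ≠ 0 := by
      intro h
      exact hxine i ((WithLp.equiv 2 (Fin n → ℂ)).injective (by simpa using h))
    have := hQ.dotProduct_mulVec_pos hne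
    rw [EuclideanSpace.inner_eq_star_dotProduct]
    simpa [Matrix.toEuclideanLin_apply, dotProduct_comm] using this
  set r : Fin n → ℝ := fun i => (⟪x i, Matrix.toEuclideanLin Q (x i)⟫ : ℂ).re with hr
  have hrpos : ∀ i, 0 < r i := fun i => (Complex.lt_def.mp (hQpos i)).1
  have hreq : ∀ i, (⟪x i, Matrix.toEuclideanLin Q (x i)⟫ : ℂ) = (r i : ℂ) := by
    intro i
    have him := (Complex.lt_def.mp (hQpos i)).2
    exact Complex.ext rfl him.symm
  refine ⟨fun i => ⟨key i, r i, hrpos i, hreq i⟩, ?_⟩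
  -- probability vector q
  set T : ℝ := ∑ j, p j / r j with hT
  have hTpos : 0 < T := by
    obtain ⟨i, hi⟩ : ∃ i, 0 < p i := by
      by_contra h
      push_neg at h
      have : ∀ i, p i = 0 := fun i => le_antisymm (h i) (hp0 i)
      rw [Finset.sum_congr rfl (fun i _ => this i)] at hp1
      simp at hp1
    refine Finset.sum_pos' (fun j _ => div_nonneg (hp0 j) (hrpos j).le) ⟨i, Finset.mem_univ i, div_pos hi (hrpos i)⟩
  set q : Fin n → ℝ := fun i => (p i / r i) / T with hq
  have hq0 : ∀ i, 0 ≤ q i := fun i =>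
    div_nonneg (div_nonneg (hp0 i) (hrpos i).le) hTpos.le
  have hq1 : ∑ i, q i = 1 := by
    rw [hq]
    rw [← Finset.sum_div]
    rw [← hT, div_self hTpos.ne']
  have hqsum : ∑ i, (q i : ℂ) * ⟪x i, Matrix.toEuclideanLin (V * Q) (x i)⟫ = 0 := by
    have : ∀ i, (q i : ℂ) * ⟪x i, Matrix.toEuclideanLin (V * Q) (x i)⟫
        = (T⁻¹ : ℝ) * ((p i : ℂ) * lam i) := by
      intro i
      rw [key i, hreq i, hq]
      push_cast
      have : (r i : ℂ) ≠ 0 := by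
        exact_mod_cast (hrpos i).ne'
      field_simp
    rw [Finset.sum_congr rfl (fun i _ => this i), ← Finset.mul_sum, hpl, mul_zero]
  refine ⟨⟨q, hq0, hq1, hqsum⟩, ?_⟩
  -- convex hull
  have hmem : ∀ i, ⟪x i, Matrix.toEuclideanLin (V * Q) (x i)⟫ ∈ numRange (V * Q) :=
    fun i => ⟨x i, hxnorm i, rfl⟩
  have := Finset.centerMass_mem_convexHull (Finset.univ : Finset (Fin n))
    (fun i _ => hq0 i) (by rw [hq1]; norm_num)
    (fun i _ => hmem i)
  rwa [Finset.centerMass, hq1, inv_one, one_smul,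
    show ∑ i, q i • ⟪x i, Matrix.toEuclideanLin (V * Q) (x i)⟫ = 0 by
      simpa [Complex.real_smul] using hqsum] at this
end

section
/- Let U := diag(1, i) ⊗ diag(1, i), the 4×4 diagonal matrix indexed by pairs from Fin 2 × Fin 2 with diagonal entries D_{(1,1)} = 1, D_{(1,2)} = D_{(2,1)} = i, D_{(2,2)} = −1. Then 1/2 is the least element of the set { |⟨ψ1⊗ψ2, U(ψ1⊗ψ2)⟩| : ψ1, ψ2 ∈ ℂ², ‖ψ1‖ = ‖ψ2‖ = 1 }; in particular |⟨ψ1⊗ψ2, U(ψ1⊗ψ2)⟩| ≥ 1/2 for all unit ψ1, ψ2 ∈ ℂ², with equality attained (e.g. at ψ1 = ψ2 = (1/√2, 1/√2)). That is, z_{2:2}(U) = 1/2. -/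
open scoped ComplexInnerProductSpace Kronecker Matrix

/-- The matrix `U = diag(1, i) ⊗ diag(1, i)`, a 4×4 diagonal matrix indexed by
`Fin 2 × Fin 2` with diagonal entries `1, i, i, -1`. -/
noncomputable def diagExample : Matrix (Fin 2 × Fin 2) (Fin 2 × Fin 2) ℂ :=
  (Matrix.diagonal ![1, Complex.I]) ⊗ₖ (Matrix.diagonal ![1, Complex.I])

open Complex in
lemma stmt15_key (ψ1 ψ2 : EuclideanSpace ℂ (Fin 2)) :
    ⟪tensorVec ψ1 ψ2, Matrix.toEuclideanLin diagExample (tensorVec ψ1 ψ2)⟫ =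
      ((normSq (ψ1 0) : ℂ) + normSq (ψ1 1) * I) *
      ((normSq (ψ2 0) : ℂ) + normSq (ψ2 1) * I) := by
  simp only [diagExample, Matrix.diagonal_kronecker_diagonal, PiLp.inner_apply,
    Matrix.toEuclideanLin_apply, tensorVec, RCLike.inner_apply, Fintype.sum_prod_type,
    Fin.sum_univ_two, PiLp.toLp_apply, Matrix.mulVec_diagonal,
    WithLp.ofLp_toLp, Matrix.cons_val_zero, Matrix.cons_val_one, Matrix.head_cons,
    map_mul, one_mul, mul_one]
  have h1 : ∀ z : ℂ, (starRingEnd ℂ) z * z = (normSq z : ℂ) := fun z => by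
    rw [mul_comm, Complex.mul_conj]
  ring_nf
  rw [← h1 (ψ1 0), ← h1 (ψ1 1), ← h1 (ψ2 0), ← h1 (ψ2 1)]
  ring

open Complex in
lemma stmt15_normsq_of_unit (ψ : EuclideanSpace ℂ (Fin 2)) (h : ‖ψ‖ = 1) :
    normSq (ψ 0) + normSq (ψ 1) = 1 := by
  have := EuclideanSpace.norm_eq ψ
  rw [h, Fin.sum_univ_two, eq_comm, Real.sqrt_eq_one] at this
  simpa [Complex.sq_norm] using this

open Complex in
lemma stmt15_abs_factor (a b : ℝ) (ha : 0 ≤ a) (hb : 0 ≤ b) (hab : a + b = 1) :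
    (1:ℝ)/2 ≤ (‖(a:ℂ) + b * I‖)^2 := by
  rw [Complex.sq_norm]
  have : normSq ((a:ℂ) + b * I) = a^2 + b^2 := by
    simpa using Complex.normSq_add_mul_I a b
  rw [this]; nlinarith [sq_nonneg (a - b)]

open Complex in
lemma stmt15_vnormsq : normSq (((Real.sqrt 2 : ℂ))⁻¹) = 1/2 := by
  rw [Complex.normSq_inv]
  norm_num [Complex.normSq_ofReal, Real.mul_self_sqrt (by norm_num : (0:ℝ) ≤ 2)]

open Complex in
lemma stmt15_vnorm (v : EuclideanSpace ℂ (Fin 2)) (hv : ∀ i, v i = ((Real.sqrt 2 : ℂ))⁻¹) :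
    ‖v‖ = 1 := by
  rw [EuclideanSpace.norm_eq, Fin.sum_univ_two, hv, hv]
  have h : ‖((Real.sqrt 2 : ℂ))⁻¹‖ ^ 2 = 1/2 := by
    have := stmt15_vnormsq
    rw [← Complex.sq_norm] at this
    simp [this]
  rw [h]; norm_num

open Complex in
lemma stmt15_absval :
    ‖(((1:ℝ)/2 : ℂ) + ((1:ℝ)/2) * I) * (((1:ℝ)/2 : ℂ) + ((1:ℝ)/2) * I)‖ = 1/2 := by
  rw [norm_mul, ← sq, Complex.sq_norm]
  have := Complex.normSq_add_mul_I (1/2) (1/2)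
  norm_num at this ⊢
  exact this

open Complex in
lemma stmt15_witness (v : EuclideanSpace ℂ (Fin 2)) (hv : ∀ i, v i = ((Real.sqrt 2 : ℂ))⁻¹) :
    ‖⟪tensorVec v v, Matrix.toEuclideanLin diagExample (tensorVec v v)⟫‖ = 1/2 := by
  rw [stmt15_key, hv 0, hv 1, stmt15_vnormsq]
  have := stmt15_absval
  push_cast at this ⊢
  exact this

/-- For `U = diag(1,i) ⊗ diag(1,i)`, the value `1/2` is the least element
of `{ |⟨ψ1⊗ψ2, U(ψ1⊗ψ2)⟩| : ‖ψ1‖ = ‖ψ2‖ = 1 }`, i.e. `z_{2:2}(U) = 1/2`; in particular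
the bound is attained at `ψ1 = ψ2 = (1/√2, 1/√2)`. -/
theorem stmt15 :
    IsLeast
      {r : ℝ | ∃ ψ1 ψ2 : EuclideanSpace ℂ (Fin 2), ‖ψ1‖ = 1 ∧ ‖ψ2‖ = 1 ∧
        r = ‖⟪tensorVec ψ1 ψ2, Matrix.toEuclideanLin diagExample (tensorVec ψ1 ψ2)⟫‖}
      (1 / 2) ∧
    (let v : EuclideanSpace ℂ (Fin 2) := WithLp.toLp 2 (fun _ => ((Real.sqrt 2 : ℂ))⁻¹)
     ‖⟪tensorVec v v, Matrix.toEuclideanLin diagExample (tensorVec v v)⟫‖ = 1 / 2) := by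
  refine ⟨⟨⟨WithLp.toLp 2 (fun _ => ((Real.sqrt 2 : ℂ))⁻¹), WithLp.toLp 2 (fun _ => ((Real.sqrt 2 : ℂ))⁻¹),
      stmt15_vnorm _ (fun _ => rfl), stmt15_vnorm _ (fun _ => rfl),
      (stmt15_witness _ (fun _ => rfl)).symm⟩, ?_⟩, stmt15_witness _ (fun _ => rfl)⟩
  rintro r ⟨ψ1, ψ2, h1, h2, rfl⟩
  rw [stmt15_key, norm_mul]
  have f1 := stmt15_abs_factor _ _ (Complex.normSq_nonneg (ψ1 0))
    (Complex.normSq_nonneg (ψ1 1)) (stmt15_normsq_of_unit ψ1 h1)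
  have f2 := stmt15_abs_factor _ _ (Complex.normSq_nonneg (ψ2 0))
    (Complex.normSq_nonneg (ψ2 1)) (stmt15_normsq_of_unit ψ2 h2)
  have g1 := norm_nonneg
    ((Complex.normSq (ψ1 0) : ℂ) + Complex.normSq (ψ1 1) * Complex.I)
  have g2 := norm_nonneg
    ((Complex.normSq (ψ2 0) : ℂ) + Complex.normSq (ψ2 1) * Complex.I)
  nlinarith [mul_nonneg g1 g2]
end
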